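/- arXiv:2604.13138 — 7 statements merged into one kernel-verified Lean document; each statement's English description precedes it below -/
import Mathlib

section
/- Let K > 0 and b be real numbers with b ∉ {0, 1/3, 1/2, 1}, set m := (1−3b)/(1−2b), and let u : ℝ → ℝ be four times differentiable on an open interval J with u'''(x) ≥ 0 for all x ∈ J. Then u satisfies u⁗(x) = (u'''(x))^m for all x ∈ J if and only if the function v defined by v(t) := K^(3/b)·u(t/K²) satisfies v⁗(t) = K·(v'''(t))^m for all t with t/K² ∈ J. -/
/-- the point transformation `x̄ = K²x, ū = K^{3/b}u` relates the canonical form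
`u⁗ = u'''^{(1−3b)/(1−2b)}` to `ū⁗ = K·ū'''^{(1−3b)/(1−2b)}`. -/
theorem stmt_4 (K b : ℝ) (hK : 0 < K) (hb0 : b ≠ 0) (hb13 : b ≠ 1 / 3)
    (hb12 : b ≠ 1 / 2) (hb1 : b ≠ 1)
    (m : ℝ) (hm : m = (1 - 3 * b) / (1 - 2 * b)) (u : ℝ → ℝ) (J : Set ℝ)
    (hJ : ∃ a c : ℝ, J = Set.Ioo a c)
    (hd1 : ∀ x ∈ J, DifferentiableAt ℝ u x)
    (hd2 : ∀ x ∈ J, DifferentiableAt ℝ (deriv u) x)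
    (hd3 : ∀ x ∈ J, DifferentiableAt ℝ (deriv^[2] u) x)
    (hd4 : ∀ x ∈ J, DifferentiableAt ℝ (deriv^[3] u) x)
    (hpos : ∀ x ∈ J, 0 ≤ deriv^[3] u x)
    (v : ℝ → ℝ) (hv : ∀ t, v t = K ^ ((3 : ℝ) / b) * u (t / K ^ 2)) :
    (∀ x ∈ J, deriv^[4] u x = (deriv^[3] u x) ^ m) ↔
      (∀ t : ℝ, t / K ^ 2 ∈ J → deriv^[4] v t = K * (deriv^[3] v t) ^ m) := by
  obtain ⟨a, c, rfl⟩ := hJ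
  have hK2 : (K ^ 2 : ℝ) ≠ 0 := by positivity
  set A : ℝ := K ^ ((3 : ℝ) / b) with hA
  have hApos : (0 : ℝ) < A := Real.rpow_pos_of_pos hK _
  have hopen : IsOpen {t : ℝ | t / K ^ 2 ∈ Set.Ioo a c} := by
    have hc : Continuous fun t : ℝ => t / K ^ 2 := continuous_id.div_const _
    exact isOpen_Ioo.preimage hc
  have key : ∀ (A' : ℝ) (n : ℕ),
      (∀ x ∈ Set.Ioo a c, DifferentiableAt ℝ (deriv^[n] u) x) →
      (∀ t : ℝ, t / K ^ 2 ∈ Set.Ioo a c →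
        deriv^[n] v t = A' * deriv^[n] u (t / K ^ 2)) →
      ∀ t : ℝ, t / K ^ 2 ∈ Set.Ioo a c →
        deriv^[n + 1] v t = (A' / K ^ 2) * deriv^[n + 1] u (t / K ^ 2) := by
    intro A' n hg heq t ht
    rw [Function.iterate_succ_apply', Function.iterate_succ_apply']
    have hev : deriv^[n] v =ᶠ[nhds t] fun s => A' * deriv^[n] u (s / K ^ 2) := by
      filter_upwards [hopen.mem_nhds ht] with s hs using heq s hs
    rw [hev.deriv_eq]
    have h1 : HasDerivAt (fun s : ℝ => s / K ^ 2) (1 / K ^ 2) t := by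
      simpa using (hasDerivAt_id t).div_const (K ^ 2)
    have h2 : HasDerivAt (fun s => A' * deriv^[n] u (s / K ^ 2))
        (A' * (deriv (deriv^[n] u) (t / K ^ 2) * (1 / K ^ 2))) t := by
      simpa [Function.comp] using
        (((hg _ ht).hasDerivAt).comp t h1).const_mul A'
    rw [h2.deriv]; ring
  have E0 : ∀ t : ℝ, t / K ^ 2 ∈ Set.Ioo a c →
      deriv^[0] v t = A * deriv^[0] u (t / K ^ 2) := fun t _ => hv t
  have E1 := key A 0 hd1 E0
  have E2 := key (A / K ^ 2) 1 hd2 E1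
  have E3 := key (A / K ^ 2 / K ^ 2) 2 hd3 E2
  have E4 := key (A / K ^ 2 / K ^ 2 / K ^ 2) 3 hd4 E3
  simp only [Nat.reduceAdd] at E1 E2 E3 E4
  -- constants
  have hpow : ∀ n : ℕ, K ^ ((n : ℝ)) = K ^ n := fun n => Real.rpow_natCast K n
  have h6 : K ^ ((3 : ℝ) / b - 6) = A / K ^ 6 := by
    rw [sub_eq_add_neg, Real.rpow_add hK, Real.rpow_neg hK.le,
      show ((6 : ℝ)) = ((6 : ℕ) : ℝ) by norm_num, hpow]
    simp [hA, div_eq_mul_inv]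
  have h8 : K ^ ((3 : ℝ) / b - 8) = A / K ^ 8 := by
    rw [sub_eq_add_neg, Real.rpow_add hK, Real.rpow_neg hK.le,
      show ((8 : ℝ)) = ((8 : ℕ) : ℝ) by norm_num, hpow]
    simp [hA, div_eq_mul_inv]
  have hB3 : A / K ^ 2 / K ^ 2 / K ^ 2 = K ^ ((3 : ℝ) / b - 6) := by
    rw [h6]; ring
  have hB4 : A / K ^ 2 / K ^ 2 / K ^ 2 / K ^ 2 = K ^ ((3 : ℝ) / b - 8) := by
    rw [h8]; ring
  have h2b : (1 - 2 * b) ≠ 0 := by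
    intro h; apply hb12; linarith
  have hexp : (3 : ℝ) / b - 8 = 1 + ((3 : ℝ) / b - 6) * m := by
    subst hm; simp only [div_eq_mul_inv]
    have h1 := mul_inv_cancel₀ hb0
    have h2 := mul_inv_cancel₀ h2b
    generalize b⁻¹ = Y at *
    generalize (1 - 2 * b)⁻¹ = X at *
    linear_combination (9 + (18 * b - 6) * X) * h1 - 3 * Y * (1 - 3 * b) * h2
  have hKey : ∀ w : ℝ, 0 ≤ w →
      K ^ ((3 : ℝ) / b - 8) * w ^ m = K * (K ^ ((3 : ℝ) / b - 6) * w) ^ m := by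
    intro w hw
    rw [Real.mul_rpow (Real.rpow_nonneg hK.le _) hw, hexp, Real.rpow_add hK,
      Real.rpow_one, Real.rpow_mul hK.le]
    ring
  constructor
  · intro h t ht
    rw [E4 t ht, E3 t ht, h _ ht, hB4, hB3]
    exact hKey _ (hpos _ ht)
  · intro h x hx
    have hx' : (x * K ^ 2) / K ^ 2 ∈ Set.Ioo a c := by
      rwa [mul_div_cancel_right₀ _ hK2]
    have hthis := h (x * K ^ 2) hx'
    rw [E4 _ hx', E3 _ hx', mul_div_cancel_right₀ _ hK2, hB4, hB3,
      ← hKey _ (hpos x hx)] at hthis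
    exact mul_left_cancel₀ (ne_of_gt (Real.rpow_pos_of_pos hK _)) hthis
end

section
/- Let u : ℝ → ℝ be four times differentiable on an open interval J ⊆ (0,∞) with 1 + u'(x) ≠ 0 for all x ∈ J, and suppose u satisfies u⁗(x) = 6·u''(x)·((1 + u'(x))·u'''(x) − u''(x)²)/(1 + u'(x))² for all x ∈ J. Define v(t) := 1/t + u(1/t). Then for every t > 0 with 1/t ∈ J one has v'(t) ≠ 0 and v⁗(t) = 6·v''(t)·v'''(t)/v'(t) − 6·v''(t)³/v'(t)². -/
private lemma hasDerivAt_comp_inv (f : ℝ → ℝ) {s : ℝ} (hs : s ≠ 0)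
    (hf : DifferentiableAt ℝ f (1 / s)) :
    HasDerivAt (fun x => f (1 / x)) (-(deriv f (1 / s)) / s ^ 2) s := by
  have h1 : HasDerivAt (fun x : ℝ => 1 / x) (-(1 / s ^ 2)) s := by
    simpa [one_div] using hasDerivAt_inv hs
  have h2 : HasDerivAt (fun x => f (1 / x)) (deriv f (1 / s) * -(1 / s ^ 2)) s :=
    hf.hasDerivAt.comp s h1
  have h3 : deriv f (1 / s) * -(1 / s ^ 2) = -(deriv f (1 / s)) / s ^ 2 := by
    ring
  exact h3 ▸ h2

set_option maxHeartbeats 1000000 in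
private lemma key_alg (t A P2 P3 : ℝ) (ht : t ≠ 0) (h1 : A ≠ 0) :
    6 * P2 * (A * P3 - P2 ^ 2) / A ^ 2 / t ^ 8
      + 12 * P3 / t ^ 7 + 36 * P2 / t ^ 6 + 24 * A / t ^ 5
    = 6 * (P2 / t ^ 4 + 2 * A / t ^ 3)
        * (-(P3 / t ^ 6) - 6 * P2 / t ^ 5 - 6 * A / t ^ 4)
        / -(A / t ^ 2)
      - 6 * (P2 / t ^ 4 + 2 * A / t ^ 3) ^ 3 / (-(A / t ^ 2)) ^ 2 := by
  field_simp
  ring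

/-- the point transformation `x̄ = 1/x, ū = x + u` maps the ODE
`u⁗ = 6u''((1+u')u''' − u''²)/(1+u')²` to the canonical form
`ū⁗ = 6ū''ū'''/ū' − 6ū''³/ū'²`. -/
theorem stmt_8 (u : ℝ → ℝ) (J : Set ℝ)
    (hJ : ∃ a b : ℝ, J = Set.Ioo a b) (hJpos : J ⊆ Set.Ioi (0 : ℝ))
    (hd1 : ∀ x ∈ J, DifferentiableAt ℝ u x)
    (hd2 : ∀ x ∈ J, DifferentiableAt ℝ (deriv u) x)
    (hd3 : ∀ x ∈ J, DifferentiableAt ℝ (deriv^[2] u) x)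
    (hd4 : ∀ x ∈ J, DifferentiableAt ℝ (deriv^[3] u) x)
    (hne : ∀ x ∈ J, 1 + deriv u x ≠ 0)
    (hode : ∀ x ∈ J, deriv^[4] u x =
      6 * deriv^[2] u x * ((1 + deriv u x) * deriv^[3] u x - (deriv^[2] u x) ^ 2)
        / (1 + deriv u x) ^ 2)
    (v : ℝ → ℝ) (hv : ∀ t, v t = 1 / t + u (1 / t)) :
    ∀ t : ℝ, 0 < t → 1 / t ∈ J →
      deriv v t ≠ 0 ∧
        deriv^[4] v t =
          6 * deriv^[2] v t * deriv^[3] v t / deriv v t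
            - 6 * (deriv^[2] v t) ^ 3 / (deriv v t) ^ 2 := by
  have hJopen : IsOpen J := by obtain ⟨a, b, rfl⟩ := hJ; exact isOpen_Ioo
  have i2 : ∀ f : ℝ → ℝ, deriv^[2] f = deriv (deriv f) := fun f => by
    simp [Function.iterate_succ_apply']
  have i3 : ∀ f : ℝ → ℝ, deriv^[3] f = deriv (deriv^[2] f) := fun f => by
    simp [Function.iterate_succ_apply']
  have i4 : ∀ f : ℝ → ℝ, deriv^[4] f = deriv (deriv^[3] f) := fun f => by
    simp [Function.iterate_succ_apply']
  have hd3' : ∀ x ∈ J, DifferentiableAt ℝ (deriv (deriv u)) x := by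
    rw [← i2 u]; exact hd3
  have hd4' : ∀ x ∈ J, DifferentiableAt ℝ (deriv (deriv (deriv u))) x := by
    rw [← i2 u, ← i3 u]; exact hd4
  have hT : IsOpen {s : ℝ | 0 < s ∧ 1 / s ∈ J} := by
    have he : {s : ℝ | 0 < s ∧ 1 / s ∈ J} = Set.Ioi 0 ∩ (fun s : ℝ => 1 / s) ⁻¹' J := by
      ext s; simp [Set.mem_Ioi]
    rw [he]
    exact ContinuousOn.isOpen_inter_preimage
      (ContinuousOn.div continuousOn_const continuousOn_id fun s hs => ne_of_gt hs)
      isOpen_Ioi hJopen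
  -- first derivative
  have hA : ∀ s : ℝ, 0 < s → 1 / s ∈ J →
      HasDerivAt v (-((1 + deriv u (1 / s)) / s ^ 2)) s := by
    intro s hs0 hsJ
    have hs : s ≠ 0 := ne_of_gt hs0
    have h1 : HasDerivAt (fun x : ℝ => 1 / x) (-(1 / s ^ 2)) s := by
      simpa [one_div] using hasDerivAt_inv hs
    have h2 := hasDerivAt_comp_inv u hs (hd1 _ hsJ)
    have h3 := h1.add h2
    have hveq : v = fun x => 1 / x + u (1 / x) := funext hv
    rw [hveq]
    refine h3.congr_deriv ?_
    ring
  -- second derivative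
  have hB : ∀ s : ℝ, 0 < s → 1 / s ∈ J →
      HasDerivAt (deriv v)
        (deriv (deriv u) (1 / s) / s ^ 4 + 2 * (1 + deriv u (1 / s)) / s ^ 3) s := by
    intro s hs0 hsJ
    have hs : s ≠ 0 := ne_of_gt hs0
    have hN : HasDerivAt (fun x : ℝ => 1 + deriv u (1 / x))
        (-(deriv (deriv u) (1 / s)) / s ^ 2) s := by
      exact (hasDerivAt_comp_inv (deriv u) hs (hd2 _ hsJ)).const_add 1
    have hD2 : HasDerivAt (fun x : ℝ => x ^ 2) (2 * s) s := by
      simpa using hasDerivAt_pow 2 s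
    have hg := (hN.div hD2 (pow_ne_zero 2 hs)).neg
    have heq : deriv v =ᶠ[nhds s] fun x => -((1 + deriv u (1 / x)) / x ^ 2) := by
      filter_upwards [hT.mem_nhds ⟨hs0, hsJ⟩] with x hx
      exact (hA x hx.1 hx.2).deriv
    refine HasDerivAt.congr_of_eventuallyEq ?_ heq
    refine hg.congr_deriv ?_
    field_simp
    ring
  -- third derivative
  have hC : ∀ s : ℝ, 0 < s → 1 / s ∈ J →
      HasDerivAt (deriv^[2] v)
        (-(deriv (deriv (deriv u)) (1 / s) / s ^ 6)
          - 6 * deriv (deriv u) (1 / s) / s ^ 5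
          - 6 * (1 + deriv u (1 / s)) / s ^ 4) s := by
    intro s hs0 hsJ
    have hs : s ≠ 0 := ne_of_gt hs0
    have hN : HasDerivAt (fun x : ℝ => 1 + deriv u (1 / x))
        (-(deriv (deriv u) (1 / s)) / s ^ 2) s := by
      exact (hasDerivAt_comp_inv (deriv u) hs (hd2 _ hsJ)).const_add 1
    have hD3 : HasDerivAt (fun x : ℝ => x ^ 3) (3 * s ^ 2) s := by
      simpa using hasDerivAt_pow 3 s
    have hD4 : HasDerivAt (fun x : ℝ => x ^ 4) (4 * s ^ 3) s := by
      simpa using hasDerivAt_pow 4 s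
    have ht1 := (hasDerivAt_comp_inv (deriv (deriv u)) hs (hd3' _ hsJ)).div hD4
      (pow_ne_zero 4 hs)
    have ht2 := (hN.const_mul (2 : ℝ)).div hD3 (pow_ne_zero 3 hs)
    have hg := ht1.add ht2
    have heq : deriv^[2] v =ᶠ[nhds s] fun x =>
        deriv (deriv u) (1 / x) / x ^ 4 + 2 * (1 + deriv u (1 / x)) / x ^ 3 := by
      filter_upwards [hT.mem_nhds ⟨hs0, hsJ⟩] with x hx
      rw [i2 v]; exact (hB x hx.1 hx.2).deriv
    refine HasDerivAt.congr_of_eventuallyEq ?_ heq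
    refine hg.congr_deriv ?_
    field_simp
    ring
  intro t ht htJ
  have htne : t ≠ 0 := ne_of_gt ht
  -- fourth derivative at t
  have hD' : HasDerivAt (deriv^[3] v)
      (deriv (deriv (deriv (deriv u))) (1 / t) / t ^ 8
        + 12 * deriv (deriv (deriv u)) (1 / t) / t ^ 7
        + 36 * deriv (deriv u) (1 / t) / t ^ 6
        + 24 * (1 + deriv u (1 / t)) / t ^ 5) t := by
    have hN : HasDerivAt (fun x : ℝ => 1 + deriv u (1 / x))
        (-(deriv (deriv u) (1 / t)) / t ^ 2) t := by
      exact (hasDerivAt_comp_inv (deriv u) htne (hd2 _ htJ)).const_add 1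
    have hD4 : HasDerivAt (fun x : ℝ => x ^ 4) (4 * t ^ 3) t := by
      simpa using hasDerivAt_pow 4 t
    have hD5 : HasDerivAt (fun x : ℝ => x ^ 5) (5 * t ^ 4) t := by
      simpa using hasDerivAt_pow 5 t
    have hD6 : HasDerivAt (fun x : ℝ => x ^ 6) (6 * t ^ 5) t := by
      simpa using hasDerivAt_pow 6 t
    have ht1 := ((hasDerivAt_comp_inv (deriv (deriv (deriv u))) htne (hd4' _ htJ)).div hD6
      (pow_ne_zero 6 htne)).neg
    have ht2 := ((hasDerivAt_comp_inv (deriv (deriv u)) htne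
      (hd3' _ htJ)).const_mul (6 : ℝ)).div hD5 (pow_ne_zero 5 htne)
    have ht3 := (hN.const_mul (6 : ℝ)).div hD4 (pow_ne_zero 4 htne)
    have hg := (ht1.sub ht2).sub ht3
    have heq : deriv^[3] v =ᶠ[nhds t] fun x =>
        -(deriv (deriv (deriv u)) (1 / x) / x ^ 6)
          - 6 * deriv (deriv u) (1 / x) / x ^ 5
          - 6 * (1 + deriv u (1 / x)) / x ^ 4 := by
      filter_upwards [hT.mem_nhds ⟨ht, htJ⟩] with x hx
      rw [i3 v]; exact (hC x hx.1 hx.2).deriv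
    refine HasDerivAt.congr_of_eventuallyEq ?_ heq
    refine hg.congr_deriv ?_
    field_simp
    ring
  have e1 : deriv v t = -((1 + deriv u (1 / t)) / t ^ 2) := (hA t ht htJ).deriv
  have e2 : deriv^[2] v t
      = deriv (deriv u) (1 / t) / t ^ 4 + 2 * (1 + deriv u (1 / t)) / t ^ 3 := by
    rw [i2 v]; exact (hB t ht htJ).deriv
  have e3 : deriv^[3] v t
      = -(deriv (deriv (deriv u)) (1 / t) / t ^ 6)
          - 6 * deriv (deriv u) (1 / t) / t ^ 5
          - 6 * (1 + deriv u (1 / t)) / t ^ 4 := by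
    rw [i3 v]; exact (hC t ht htJ).deriv
  have e4 : deriv^[4] v t
      = deriv (deriv (deriv (deriv u))) (1 / t) / t ^ 8
        + 12 * deriv (deriv (deriv u)) (1 / t) / t ^ 7
        + 36 * deriv (deriv u) (1 / t) / t ^ 6
        + 24 * (1 + deriv u (1 / t)) / t ^ 5 := by
    rw [i4 v]; exact hD'.deriv
  have hne1 : 1 + deriv u (1 / t) ≠ 0 := hne _ htJ
  have hodet : deriv (deriv (deriv (deriv u))) (1 / t)
      = 6 * deriv (deriv u) (1 / t)
          * ((1 + deriv u (1 / t)) * deriv (deriv (deriv u)) (1 / t)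
            - (deriv (deriv u) (1 / t)) ^ 2) / (1 + deriv u (1 / t)) ^ 2 := by
    have h := hode _ htJ
    rw [i4 u, i3 u, i2 u] at h
    exact h
  rw [e1, e2, e3, e4, hodet]
  constructor
  · exact neg_ne_zero.mpr (div_ne_zero hne1 (pow_ne_zero 2 htne))
  · exact key_alg t (1 + deriv u (1 / t)) _ _ htne hne1
end

section
/- Let u : ℝ → ℝ be four times differentiable on an open interval J with u'(x) ≠ 0 and u''(x) ≠ 0 for all x ∈ J, and let g : ℝ → ℝ be four times differentiable on the image u(J) with g(u(x)) = x for all x ∈ J. Then for every x ∈ J one has g''(u(x)) ≠ 0, and the equation u⁗(x) = u'''(x)²/u''(x) + 4·u''(x)·u'''(x)/u'(x) − 6·u''(x)³/u'(x)² holds if and only if g⁗(u(x)) = g'''(u(x))²/g''(u(x)). -/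
/-- the hodograph transformation `x̄ = u, ū = x` relates the ODE
`u⁗ = u'''²/u'' + 4u''u'''/u' − 6u''³/u'²` to the canonical form `ū⁗ = ū'''²/ū''`. -/
theorem stmt_10 (u g : ℝ → ℝ) (J : Set ℝ)
    (hJ : ∃ a b : ℝ, J = Set.Ioo a b)
    (hdu1 : ∀ x ∈ J, DifferentiableAt ℝ u x)
    (hdu2 : ∀ x ∈ J, DifferentiableAt ℝ (deriv u) x)
    (hdu3 : ∀ x ∈ J, DifferentiableAt ℝ (deriv^[2] u) x)
    (hdu4 : ∀ x ∈ J, DifferentiableAt ℝ (deriv^[3] u) x)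
    (hu1 : ∀ x ∈ J, deriv u x ≠ 0)
    (hu2 : ∀ x ∈ J, deriv^[2] u x ≠ 0)
    (hdg1 : ∀ y ∈ u '' J, DifferentiableAt ℝ g y)
    (hdg2 : ∀ y ∈ u '' J, DifferentiableAt ℝ (deriv g) y)
    (hdg3 : ∀ y ∈ u '' J, DifferentiableAt ℝ (deriv^[2] g) y)
    (hdg4 : ∀ y ∈ u '' J, DifferentiableAt ℝ (deriv^[3] g) y)
    (hgu : ∀ x ∈ J, g (u x) = x) :
    ∀ x ∈ J, deriv^[2] g (u x) ≠ 0 ∧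
      ((deriv^[4] u x =
          (deriv^[3] u x) ^ 2 / deriv^[2] u x
            + 4 * deriv^[2] u x * deriv^[3] u x / deriv u x
            - 6 * (deriv^[2] u x) ^ 3 / (deriv u x) ^ 2) ↔
        deriv^[4] g (u x) = (deriv^[3] g (u x)) ^ 2 / deriv^[2] g (u x)) := by
  obtain ⟨a, b, rfl⟩ := hJ
  have hJopen : IsOpen (Set.Ioo a b) := isOpen_Ioo
  set J := Set.Ioo a b
  have it2u : deriv^[2] u = deriv (deriv u) := rfl
  have it3u : deriv^[3] u = deriv (deriv (deriv u)) := rfl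
  have it4u : deriv^[4] u = deriv (deriv (deriv (deriv u))) := rfl
  have it2g : deriv^[2] g = deriv (deriv g) := rfl
  have it3g : deriv^[3] g = deriv (deriv (deriv g)) := rfl
  have it4g : deriv^[4] g = deriv (deriv (deriv (deriv g))) := rfl
  rw [it2u] at hdu3 hu2
  rw [it3u] at hdu4
  rw [it2g] at hdg3
  rw [it3g] at hdg4
  -- derivative hypotheses as HasDerivAt
  have hU1 : ∀ z ∈ J, HasDerivAt u (deriv u z) z := fun z hz => (hdu1 z hz).hasDerivAt
  have hU2 : ∀ z ∈ J, HasDerivAt (deriv u) (deriv (deriv u) z) z :=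
    fun z hz => (hdu2 z hz).hasDerivAt
  have hU3 : ∀ z ∈ J, HasDerivAt (deriv (deriv u)) (deriv (deriv (deriv u)) z) z :=
    fun z hz => (hdu3 z hz).hasDerivAt
  have hU4 : ∀ z ∈ J, HasDerivAt (deriv (deriv (deriv u)))
      (deriv (deriv (deriv (deriv u))) z) z := fun z hz => (hdu4 z hz).hasDerivAt
  have hmem : ∀ z ∈ J, u z ∈ u '' J := fun z hz => ⟨z, hz, rfl⟩
  have hc1 : ∀ z ∈ J, HasDerivAt (fun w => g (u w)) (deriv g (u z) * deriv u z) z :=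
    fun z hz => (hdg1 _ (hmem z hz)).hasDerivAt.comp z (hU1 z hz)
  have hc2 : ∀ z ∈ J, HasDerivAt (fun w => deriv g (u w))
      (deriv (deriv g) (u z) * deriv u z) z :=
    fun z hz => (hdg2 _ (hmem z hz)).hasDerivAt.comp z (hU1 z hz)
  have hc3 : ∀ z ∈ J, HasDerivAt (fun w => deriv (deriv g) (u w))
      (deriv (deriv (deriv g)) (u z) * deriv u z) z :=
    fun z hz => (hdg3 _ (hmem z hz)).hasDerivAt.comp z (hU1 z hz)
  have hc4 : ∀ z ∈ J, HasDerivAt (fun w => deriv (deriv (deriv g)) (u w))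
      (deriv (deriv (deriv (deriv g))) (u z) * deriv u z) z :=
    fun z hz => (hdg4 _ (hmem z hz)).hasDerivAt.comp z (hU1 z hz)
  -- first identity
  have P1 : ∀ z ∈ J, deriv g (u z) * deriv u z = 1 := by
    intro z hz
    have hid : HasDerivAt (fun w => g (u w)) 1 z := by
      have he : (fun w => g (u w)) =ᶠ[nhds z] (fun w => w) :=
        Filter.eventuallyEq_of_mem (hJopen.mem_nhds hz) (fun w hw => hgu w hw)
      exact (hasDerivAt_id z).congr_of_eventuallyEq he
    exact (hc1 z hz).unique hid
  -- second identity
  have P2 : ∀ z ∈ J, deriv (deriv g) (u z) * deriv u z * deriv u z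
      + deriv g (u z) * deriv (deriv u) z = 0 := by
    intro z hz
    have hd : HasDerivAt (fun w => deriv g (u w) * deriv u w)
        (deriv (deriv g) (u z) * deriv u z * deriv u z
          + deriv g (u z) * deriv (deriv u) z) z :=
      (hc2 z hz).mul (hU2 z hz)
    have hz0 : HasDerivAt (fun w => deriv g (u w) * deriv u w) 0 z := by
      have he : (fun w => deriv g (u w) * deriv u w) =ᶠ[nhds z] (fun _ => (1:ℝ)) :=
        Filter.eventuallyEq_of_mem (hJopen.mem_nhds hz) (fun w hw => P1 w hw)
      exact (hasDerivAt_const z (1:ℝ)).congr_of_eventuallyEq he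
    exact hd.unique hz0
  -- third identity
  have P3 : ∀ z ∈ J, deriv (deriv (deriv g)) (u z) * deriv u z * deriv u z * deriv u z
      + 3 * (deriv (deriv g) (u z) * deriv u z * deriv (deriv u) z)
      + deriv g (u z) * deriv (deriv (deriv u)) z = 0 := by
    intro z hz
    have hd : HasDerivAt
        (fun w => deriv (deriv g) (u w) * deriv u w * deriv u w
          + deriv g (u w) * deriv (deriv u) w)
        (deriv (deriv (deriv g)) (u z) * deriv u z * deriv u z * deriv u z
          + 3 * (deriv (deriv g) (u z) * deriv u z * deriv (deriv u) z)
          + deriv g (u z) * deriv (deriv (deriv u)) z) z := by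
      have h := (((hc3 z hz).mul (hU2 z hz)).mul (hU2 z hz)).add
        ((hc2 z hz).mul (hU3 z hz))
      refine h.congr_deriv ?_
      simp only [Pi.mul_apply]
      ring
    have hz0 : HasDerivAt
        (fun w => deriv (deriv g) (u w) * deriv u w * deriv u w
          + deriv g (u w) * deriv (deriv u) w) 0 z := by
      have he : (fun w => deriv (deriv g) (u w) * deriv u w * deriv u w
          + deriv g (u w) * deriv (deriv u) w) =ᶠ[nhds z] (fun _ => (0:ℝ)) :=
        Filter.eventuallyEq_of_mem (hJopen.mem_nhds hz) (fun w hw => P2 w hw)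
      exact (hasDerivAt_const z (0:ℝ)).congr_of_eventuallyEq he
    exact hd.unique hz0
  -- fourth identity
  have P4 : ∀ z ∈ J,
      deriv (deriv (deriv (deriv g))) (u z) * deriv u z * deriv u z * deriv u z * deriv u z
      + 6 * (deriv (deriv (deriv g)) (u z) * deriv u z * deriv u z * deriv (deriv u) z)
      + 3 * (deriv (deriv g) (u z) * deriv (deriv u) z * deriv (deriv u) z)
      + 4 * (deriv (deriv g) (u z) * deriv u z * deriv (deriv (deriv u)) z)
      + deriv g (u z) * deriv (deriv (deriv (deriv u))) z = 0 := by
    intro z hz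
    have hd : HasDerivAt
        (fun w => deriv (deriv (deriv g)) (u w) * deriv u w * deriv u w * deriv u w
          + 3 * (deriv (deriv g) (u w) * deriv u w * deriv (deriv u) w)
          + deriv g (u w) * deriv (deriv (deriv u)) w)
        (deriv (deriv (deriv (deriv g))) (u z) * deriv u z * deriv u z * deriv u z * deriv u z
          + 6 * (deriv (deriv (deriv g)) (u z) * deriv u z * deriv u z * deriv (deriv u) z)
          + 3 * (deriv (deriv g) (u z) * deriv (deriv u) z * deriv (deriv u) z)
          + 4 * (deriv (deriv g) (u z) * deriv u z * deriv (deriv (deriv u)) z)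
          + deriv g (u z) * deriv (deriv (deriv (deriv u))) z) z := by
      have h := (((((hc4 z hz).mul (hU2 z hz)).mul (hU2 z hz)).mul (hU2 z hz)).add
        ((((hc3 z hz).mul (hU2 z hz)).mul (hU3 z hz)).const_mul (3:ℝ))).add
        ((hc2 z hz).mul (hU4 z hz))
      refine h.congr_deriv ?_
      simp only [Pi.mul_apply]
      ring
    have hz0 : HasDerivAt
        (fun w => deriv (deriv (deriv g)) (u w) * deriv u w * deriv u w * deriv u w
          + 3 * (deriv (deriv g) (u w) * deriv u w * deriv (deriv u) w)
          + deriv g (u w) * deriv (deriv (deriv u)) w) 0 z := by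
      have he : (fun w => deriv (deriv (deriv g)) (u w) * deriv u w * deriv u w * deriv u w
          + 3 * (deriv (deriv g) (u w) * deriv u w * deriv (deriv u) w)
          + deriv g (u w) * deriv (deriv (deriv u)) w) =ᶠ[nhds z] (fun _ => (0:ℝ)) :=
        Filter.eventuallyEq_of_mem (hJopen.mem_nhds hz) (fun w hw => P3 w hw)
      exact (hasDerivAt_const z (0:ℝ)).congr_of_eventuallyEq he
    exact hd.unique hz0
  -- now the algebra at a fixed point
  intro x hx
  rw [it2u, it3u, it4u, it2g, it3g, it4g]
  set a1 := deriv u x with ha1d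
  set a2 := deriv (deriv u) x with ha2d
  set a3 := deriv (deriv (deriv u)) x with ha3d
  set a4 := deriv (deriv (deriv (deriv u))) x with ha4d
  set b1 := deriv g (u x) with hb1d
  set b2 := deriv (deriv g) (u x) with hb2d
  set b3 := deriv (deriv (deriv g)) (u x) with hb3d
  set b4 := deriv (deriv (deriv (deriv g))) (u x) with hb4d
  have ha1 : a1 ≠ 0 := hu1 x hx
  have ha2 : a2 ≠ 0 := hu2 x hx
  have E1 : b1 * a1 = 1 := P1 x hx
  have E2 : b2 * a1 * a1 + b1 * a2 = 0 := P2 x hx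
  have E3 : b3 * a1 * a1 * a1 + 3 * (b2 * a1 * a2) + b1 * a3 = 0 := P3 x hx
  have E4 : b4 * a1 * a1 * a1 * a1 + 6 * (b3 * a1 * a1 * a2) + 3 * (b2 * a2 * a2)
      + 4 * (b2 * a1 * a3) + b1 * a4 = 0 := P4 x hx
  have HB1 : b1 = 1 / a1 := by
    rw [eq_div_iff ha1]; exact E1
  have HB2 : b2 * a1 ^ 3 = -a2 := by
    linear_combination a1 * E2 - a2 * E1
  have HB3 : b3 * a1 ^ 5 = 3 * a2 ^ 2 - a1 * a3 := by
    linear_combination a1 ^ 2 * E3 - 3 * a1 * a2 * E2 + (3 * a2 ^ 2 - a1 * a3) * E1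
  have HB4 : b4 * a1 ^ 7 = 10 * a1 * a2 * a3 - 15 * a2 ^ 3 - a1 ^ 2 * a4 := by
    linear_combination a1 ^ 3 * E4 - 6 * a2 * HB3 - (3 * a2 ^ 2 + 4 * a1 * a3) * HB2
      - a1 ^ 2 * a4 * E1
  have hb2 : b2 ≠ 0 := by
    intro h
    rw [h, zero_mul] at HB2
    exact ha2 (by linarith)
  refine ⟨hb2, ?_⟩
  have hb2v : b2 = -a2 / a1 ^ 3 := by
    rw [eq_div_iff (pow_ne_zero 3 ha1)]; exact HB2
  have hb3v : b3 = (3 * a2 ^ 2 - a1 * a3) / a1 ^ 5 := by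
    rw [eq_div_iff (pow_ne_zero 5 ha1)]; exact HB3
  have hb4v : b4 = (10 * a1 * a2 * a3 - 15 * a2 ^ 3 - a1 ^ 2 * a4) / a1 ^ 7 := by
    rw [eq_div_iff (pow_ne_zero 7 ha1)]; exact HB4
  rw [hb2v, hb3v, hb4v]
  constructor
  · intro h
    field_simp at h ⊢
    linear_combination (-1 : ℝ) * h
  · intro h
    field_simp at h ⊢
    have h10 : a1 ^ 10 * (a4 * a2 * a1 ^ 2 - a1 ^ 2 * a3 ^ 2 - 4 * a1 * a2 ^ 2 * a3 + 6 * a2 ^ 4)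
        = a1 ^ 10 * 0 := by linear_combination -a1 ^ 10 * h
    have hQ := mul_left_cancel₀ (pow_ne_zero 10 ha1) h10
    linear_combination hQ
end

section
/- Let u : ℝ → ℝ be four times differentiable on an open interval J ⊆ (0,∞) with u(x) ≠ 0 and u(x)·u''(x) − 2·u'(x)² ≠ 0 for all x ∈ J, and suppose u satisfies u⁗(x) = (−24·u'(x)·u''(x)·u'''(x) + 18·u''(x)³ + 4·u(x)·u'''(x)²)/(3·(u(x)·u''(x) − 2·u'(x)²)) for all x ∈ J. Define v(t) := t/u(1/t). Then for every t > 0 with 1/t ∈ J one has v''(t) ≠ 0 and v⁗(t) = (4/3)·v'''(t)²/v''(t). -/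
set_option maxHeartbeats 1000000 in
private lemma stmt_11_aux (t u0 u1 u2 u3 u4 : ℝ) (ht : t ≠ 0) (hu0 : u0 ≠ 0)
    (hD : u0 * u2 - 2 * u1^2 ≠ 0)
    (hode : u4 = (-24 * u1 * u2 * u3 + 18 * u2^3 + 4 * u0 * u3^2) / (3 * (u0 * u2 - 2 * u1^2))) :
    (1/t)^5 *
          (-4 * (3 * u0^2 * u2 - 6 * u0 * u1^2
              + (1/t) * (u0^2 * u3 - 6 * u0 * u1 * u2 + 6 * u1^3)) * u0
            - (1/t) * u0 *
              ((3 * u0^2 * u3 - 6 * u0 * u1 * u2 - 6 * u1^3)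
                + (u0^2 * u3 - 6 * u0 * u1 * u2 + 6 * u1^3)
                + (1/t) * (u0^2 * u4 - 4 * u0 * u1 * u3 - 6 * u0 * u2^2 + 12 * u1^2 * u2))
            + 4 * (1/t) * u1 *
              (3 * u0^2 * u2 - 6 * u0 * u1^2
                + (1/t) * (u0^2 * u3 - 6 * u0 * u1 * u2 + 6 * u1^3)))
        / u0^5
      = 4 / 3 * ((1/t)^4 * (3 * u0^2 * u2 - 6 * u0 * u1^2
          + (1/t) * (u0^2 * u3 - 6 * u0 * u1 * u2 + 6 * u1^3)) / u0^4)^2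
        / (-((1/t)^3 * (u0 * u2 - 2 * u1^2)) / u0^3) := by
  have hV2 : -((1/t)^3 * (u0 * u2 - 2 * u1^2)) / u0^3 ≠ 0 := by
    apply div_ne_zero _ (pow_ne_zero 3 hu0)
    simp only [neg_ne_zero]
    exact mul_ne_zero (pow_ne_zero 3 (one_div_ne_zero ht)) hD
  have hD' : u0 * u2 - u1 ^ 2 * 2 ≠ 0 := by rw [mul_comm (u1 ^ 2)]; exact hD
  rw [eq_div_iff hV2, hode]
  field_simp
  ring

/-- the point transformation `x̄ = 1/x, ū = 1/(x·u)` maps the ODE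
`u⁗ = (−24u'u''u''' + 18u''³ + 4u·u'''²)/(3(u·u'' − 2u'²))` to the canonical form
`ū⁗ = (4/3)ū'''²/ū''`. -/
theorem stmt_11 (u : ℝ → ℝ) (J : Set ℝ)
    (hJ : ∃ a b : ℝ, J = Set.Ioo a b) (hJpos : J ⊆ Set.Ioi (0 : ℝ))
    (hd1 : ∀ x ∈ J, DifferentiableAt ℝ u x)
    (hd2 : ∀ x ∈ J, DifferentiableAt ℝ (deriv u) x)
    (hd3 : ∀ x ∈ J, DifferentiableAt ℝ (deriv^[2] u) x)
    (hd4 : ∀ x ∈ J, DifferentiableAt ℝ (deriv^[3] u) x)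
    (hu0 : ∀ x ∈ J, u x ≠ 0)
    (hden : ∀ x ∈ J, u x * deriv^[2] u x - 2 * (deriv u x) ^ 2 ≠ 0)
    (hode : ∀ x ∈ J, deriv^[4] u x =
      (-24 * deriv u x * deriv^[2] u x * deriv^[3] u x
          + 18 * (deriv^[2] u x) ^ 3 + 4 * u x * (deriv^[3] u x) ^ 2)
        / (3 * (u x * deriv^[2] u x - 2 * (deriv u x) ^ 2)))
    (v : ℝ → ℝ) (hv : ∀ t, v t = t / u (1 / t)) :
    ∀ t : ℝ, 0 < t → 1 / t ∈ J →
      deriv^[2] v t ≠ 0 ∧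
        deriv^[4] v t = (4 / 3) * (deriv^[3] v t) ^ 2 / deriv^[2] v t := by
  have hveq : v = fun s : ℝ => s / u (1 / s) := funext hv
  subst hveq
  have hJopen : IsOpen J := by obtain ⟨a, b, rfl⟩ := hJ; exact isOpen_Ioo
  have hSopen : IsOpen {t : ℝ | 0 < t ∧ 1 / t ∈ J} := by
    rw [isOpen_iff_mem_nhds]
    rintro t ⟨ht, htJ⟩
    have hct : ContinuousAt (fun s : ℝ => 1 / s) t := by
      simpa [one_div] using (continuousAt_inv₀ (ne_of_gt ht))
    have h1 : (fun s : ℝ => 1 / s) ⁻¹' J ∈ nhds t :=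
      hct.preimage_mem_nhds (hJopen.mem_nhds htJ)
    have h2 : Set.Ioi (0 : ℝ) ∈ nhds t := Ioi_mem_nhds ht
    filter_upwards [h1, h2] with s hs1 hs2
    exact ⟨hs2, hs1⟩
  -- first derivative
  have key1 : ∀ t : ℝ, 0 < t → 1 / t ∈ J →
      HasDerivAt (fun s : ℝ => s / u (1 / s))
        ((u (1/t) + 1/t * deriv u (1/t)) / u (1/t)^2) t := by
    intro t ht htJ
    have htne : t ≠ 0 := ne_of_gt ht
    have hu0t : u (1/t) ≠ 0 := hu0 _ htJ
    have hx : HasDerivAt (fun s : ℝ => 1/s) (-(1/t^2)) t := by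
      simpa [one_div] using hasDerivAt_inv htne
    have h0 : HasDerivAt (fun s : ℝ => u (1/s)) (deriv u (1/t) * -(1/t^2)) t :=
      (hd1 _ htJ).hasDerivAt.comp t hx
    have := (hasDerivAt_id t).div h0 hu0t
    refine this.congr_deriv ?_
    simp only [id, Pi.add_apply, Pi.mul_apply, Pi.pow_apply, Pi.sub_apply, Pi.neg_apply]
    field_simp
    ring
  -- second derivative
  have key2 : ∀ t : ℝ, 0 < t → 1 / t ∈ J →
      HasDerivAt (fun s : ℝ => (u (1/s) + 1/s * deriv u (1/s)) / u (1/s)^2)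
        (-((1/t)^3 * (u (1/t) * deriv^[2] u (1/t) - 2 * deriv u (1/t)^2)) / u (1/t)^3) t := by
    intro t ht htJ
    have htne : t ≠ 0 := ne_of_gt ht
    have hu0t : u (1/t) ≠ 0 := hu0 _ htJ
    have hx : HasDerivAt (fun s : ℝ => 1/s) (-(1/t^2)) t := by
      simpa [one_div] using hasDerivAt_inv htne
    have h0 : HasDerivAt (fun s : ℝ => u (1/s)) (deriv u (1/t) * -(1/t^2)) t :=
      (hd1 _ htJ).hasDerivAt.comp t hx
    have h1 : HasDerivAt (fun s : ℝ => deriv u (1/s)) (deriv^[2] u (1/t) * -(1/t^2)) t :=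
      (hd2 _ htJ).hasDerivAt.comp t hx
    have := (h0.add (hx.mul h1)).div (h0.pow 2) (pow_ne_zero 2 hu0t)
    refine this.congr_deriv ?_
    simp only [id, Pi.add_apply, Pi.mul_apply, Pi.pow_apply, Pi.sub_apply, Pi.neg_apply]
    field_simp
    ring
  -- third derivative
  have key3 : ∀ t : ℝ, 0 < t → 1 / t ∈ J →
      HasDerivAt (fun s : ℝ =>
          -((1/s)^3 * (u (1/s) * deriv^[2] u (1/s) - 2 * deriv u (1/s)^2)) / u (1/s)^3)
        ((1/t)^4 * (3 * u (1/t)^2 * deriv^[2] u (1/t) - 6 * u (1/t) * deriv u (1/t)^2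
            + (1/t) * (u (1/t)^2 * deriv^[3] u (1/t)
              - 6 * u (1/t) * deriv u (1/t) * deriv^[2] u (1/t) + 6 * deriv u (1/t)^3))
          / u (1/t)^4) t := by
    intro t ht htJ
    have htne : t ≠ 0 := ne_of_gt ht
    have hu0t : u (1/t) ≠ 0 := hu0 _ htJ
    have hx : HasDerivAt (fun s : ℝ => 1/s) (-(1/t^2)) t := by
      simpa [one_div] using hasDerivAt_inv htne
    have h0 : HasDerivAt (fun s : ℝ => u (1/s)) (deriv u (1/t) * -(1/t^2)) t :=
      (hd1 _ htJ).hasDerivAt.comp t hx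
    have h1 : HasDerivAt (fun s : ℝ => deriv u (1/s)) (deriv^[2] u (1/t) * -(1/t^2)) t :=
      (hd2 _ htJ).hasDerivAt.comp t hx
    have h2 : HasDerivAt (fun s : ℝ => deriv^[2] u (1/s)) (deriv^[3] u (1/t) * -(1/t^2)) t :=
      (hd3 _ htJ).hasDerivAt.comp t hx
    have := (((hx.pow 3).mul ((h0.mul h2).sub ((h1.pow 2).const_mul 2))).neg).div
      (h0.pow 3) (pow_ne_zero 3 hu0t)
    refine this.congr_deriv ?_
    simp only [id, Pi.add_apply, Pi.mul_apply, Pi.pow_apply, Pi.sub_apply, Pi.neg_apply,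
      Nat.reduceSub, Nat.cast_ofNat]
    field_simp
    ring
  -- fourth derivative
  have key4 : ∀ t : ℝ, 0 < t → 1 / t ∈ J →
      HasDerivAt (fun s : ℝ =>
          (1/s)^4 * (3 * u (1/s)^2 * deriv^[2] u (1/s) - 6 * u (1/s) * deriv u (1/s)^2
            + (1/s) * (u (1/s)^2 * deriv^[3] u (1/s)
              - 6 * u (1/s) * deriv u (1/s) * deriv^[2] u (1/s) + 6 * deriv u (1/s)^3))
          / u (1/s)^4)
        ((1/t)^5 *
            (-4 * (3 * u (1/t)^2 * deriv^[2] u (1/t) - 6 * u (1/t) * deriv u (1/t)^2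
                + (1/t) * (u (1/t)^2 * deriv^[3] u (1/t)
                  - 6 * u (1/t) * deriv u (1/t) * deriv^[2] u (1/t) + 6 * deriv u (1/t)^3))
                * u (1/t)
              - (1/t) * u (1/t) *
                ((3 * u (1/t)^2 * deriv^[3] u (1/t)
                    - 6 * u (1/t) * deriv u (1/t) * deriv^[2] u (1/t) - 6 * deriv u (1/t)^3)
                  + (u (1/t)^2 * deriv^[3] u (1/t)
                    - 6 * u (1/t) * deriv u (1/t) * deriv^[2] u (1/t) + 6 * deriv u (1/t)^3)
                  + (1/t) * (u (1/t)^2 * deriv^[4] u (1/t)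
                    - 4 * u (1/t) * deriv u (1/t) * deriv^[3] u (1/t)
                    - 6 * u (1/t) * deriv^[2] u (1/t)^2
                    + 12 * deriv u (1/t)^2 * deriv^[2] u (1/t)))
              + 4 * (1/t) * deriv u (1/t) *
                (3 * u (1/t)^2 * deriv^[2] u (1/t) - 6 * u (1/t) * deriv u (1/t)^2
                  + (1/t) * (u (1/t)^2 * deriv^[3] u (1/t)
                    - 6 * u (1/t) * deriv u (1/t) * deriv^[2] u (1/t)
                    + 6 * deriv u (1/t)^3)))
          / u (1/t)^5) t := by
    intro t ht htJ
    have htne : t ≠ 0 := ne_of_gt ht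
    have hu0t : u (1/t) ≠ 0 := hu0 _ htJ
    have hx : HasDerivAt (fun s : ℝ => 1/s) (-(1/t^2)) t := by
      simpa [one_div] using hasDerivAt_inv htne
    have h0 : HasDerivAt (fun s : ℝ => u (1/s)) (deriv u (1/t) * -(1/t^2)) t :=
      (hd1 _ htJ).hasDerivAt.comp t hx
    have h1 : HasDerivAt (fun s : ℝ => deriv u (1/s)) (deriv^[2] u (1/t) * -(1/t^2)) t :=
      (hd2 _ htJ).hasDerivAt.comp t hx
    have h2 : HasDerivAt (fun s : ℝ => deriv^[2] u (1/s)) (deriv^[3] u (1/t) * -(1/t^2)) t :=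
      (hd3 _ htJ).hasDerivAt.comp t hx
    have h3 : HasDerivAt (fun s : ℝ => deriv^[3] u (1/s)) (deriv^[4] u (1/t) * -(1/t^2)) t :=
      (hd4 _ htJ).hasDerivAt.comp t hx
    have hN : HasDerivAt (fun s : ℝ =>
        3 * u (1/s)^2 * deriv^[2] u (1/s) - 6 * u (1/s) * deriv u (1/s)^2
          + (1/s) * (u (1/s)^2 * deriv^[3] u (1/s)
            - 6 * u (1/s) * deriv u (1/s) * deriv^[2] u (1/s) + 6 * deriv u (1/s)^3)) _ t :=
      (((((h0.pow 2).const_mul 3).mul h2).sub ((h0.const_mul 6).mul (h1.pow 2))).add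
        (hx.mul ((((h0.pow 2).mul h3).sub (((h0.const_mul 6).mul h1).mul h2)).add
          ((h1.pow 3).const_mul 6))))
    have := ((hx.pow 4).mul hN).div (h0.pow 4) (pow_ne_zero 4 hu0t)
    refine this.congr_deriv ?_
    simp only [id, Pi.add_apply, Pi.mul_apply, Pi.pow_apply, Pi.sub_apply, Pi.neg_apply,
      Nat.reduceSub, Nat.cast_ofNat]
    field_simp
    ring
  -- iterated derivative identities
  have d2 : ∀ t : ℝ, 0 < t → 1 / t ∈ J →
      deriv^[2] (fun s : ℝ => s / u (1 / s)) t =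
        -((1/t)^3 * (u (1/t) * deriv^[2] u (1/t) - 2 * deriv u (1/t)^2)) / u (1/t)^3 := by
    intro t ht htJ
    have hnb : deriv (fun s : ℝ => s / u (1 / s)) =ᶠ[nhds t]
        fun s : ℝ => (u (1/s) + 1/s * deriv u (1/s)) / u (1/s)^2 := by
      filter_upwards [hSopen.mem_nhds ⟨ht, htJ⟩] with s hs
      exact (key1 s hs.1 hs.2).deriv
    calc deriv^[2] (fun s : ℝ => s / u (1 / s)) t
        = deriv (deriv (fun s : ℝ => s / u (1 / s))) t := rfl
      _ = deriv (fun s : ℝ => (u (1/s) + 1/s * deriv u (1/s)) / u (1/s)^2) t := hnb.deriv_eq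
      _ = _ := (key2 t ht htJ).deriv
  have d3 : ∀ t : ℝ, 0 < t → 1 / t ∈ J →
      deriv^[3] (fun s : ℝ => s / u (1 / s)) t =
        (1/t)^4 * (3 * u (1/t)^2 * deriv^[2] u (1/t) - 6 * u (1/t) * deriv u (1/t)^2
            + (1/t) * (u (1/t)^2 * deriv^[3] u (1/t)
              - 6 * u (1/t) * deriv u (1/t) * deriv^[2] u (1/t) + 6 * deriv u (1/t)^3))
          / u (1/t)^4 := by
    intro t ht htJ
    have hnb : deriv^[2] (fun s : ℝ => s / u (1 / s)) =ᶠ[nhds t]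
        fun s : ℝ =>
          -((1/s)^3 * (u (1/s) * deriv^[2] u (1/s) - 2 * deriv u (1/s)^2)) / u (1/s)^3 := by
      filter_upwards [hSopen.mem_nhds ⟨ht, htJ⟩] with s hs
      exact d2 s hs.1 hs.2
    calc deriv^[3] (fun s : ℝ => s / u (1 / s)) t
        = deriv (deriv^[2] (fun s : ℝ => s / u (1 / s))) t := rfl
      _ = deriv (fun s : ℝ =>
            -((1/s)^3 * (u (1/s) * deriv^[2] u (1/s) - 2 * deriv u (1/s)^2)) / u (1/s)^3) t :=
          hnb.deriv_eq
      _ = _ := (key3 t ht htJ).deriv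
  have d4 : ∀ t : ℝ, 0 < t → 1 / t ∈ J →
      deriv^[4] (fun s : ℝ => s / u (1 / s)) t =
        (1/t)^5 *
            (-4 * (3 * u (1/t)^2 * deriv^[2] u (1/t) - 6 * u (1/t) * deriv u (1/t)^2
                + (1/t) * (u (1/t)^2 * deriv^[3] u (1/t)
                  - 6 * u (1/t) * deriv u (1/t) * deriv^[2] u (1/t) + 6 * deriv u (1/t)^3))
                * u (1/t)
              - (1/t) * u (1/t) *
                ((3 * u (1/t)^2 * deriv^[3] u (1/t)
                    - 6 * u (1/t) * deriv u (1/t) * deriv^[2] u (1/t) - 6 * deriv u (1/t)^3)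
                  + (u (1/t)^2 * deriv^[3] u (1/t)
                    - 6 * u (1/t) * deriv u (1/t) * deriv^[2] u (1/t) + 6 * deriv u (1/t)^3)
                  + (1/t) * (u (1/t)^2 * deriv^[4] u (1/t)
                    - 4 * u (1/t) * deriv u (1/t) * deriv^[3] u (1/t)
                    - 6 * u (1/t) * deriv^[2] u (1/t)^2
                    + 12 * deriv u (1/t)^2 * deriv^[2] u (1/t)))
              + 4 * (1/t) * deriv u (1/t) *
                (3 * u (1/t)^2 * deriv^[2] u (1/t) - 6 * u (1/t) * deriv u (1/t)^2
                  + (1/t) * (u (1/t)^2 * deriv^[3] u (1/t)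
                    - 6 * u (1/t) * deriv u (1/t) * deriv^[2] u (1/t)
                    + 6 * deriv u (1/t)^3)))
          / u (1/t)^5 := by
    intro t ht htJ
    have hnb : deriv^[3] (fun s : ℝ => s / u (1 / s)) =ᶠ[nhds t]
        fun s : ℝ =>
          (1/s)^4 * (3 * u (1/s)^2 * deriv^[2] u (1/s) - 6 * u (1/s) * deriv u (1/s)^2
            + (1/s) * (u (1/s)^2 * deriv^[3] u (1/s)
              - 6 * u (1/s) * deriv u (1/s) * deriv^[2] u (1/s) + 6 * deriv u (1/s)^3))
          / u (1/s)^4 := by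
      filter_upwards [hSopen.mem_nhds ⟨ht, htJ⟩] with s hs
      exact d3 s hs.1 hs.2
    calc deriv^[4] (fun s : ℝ => s / u (1 / s)) t
        = deriv (deriv^[3] (fun s : ℝ => s / u (1 / s))) t := rfl
      _ = deriv (fun s : ℝ =>
            (1/s)^4 * (3 * u (1/s)^2 * deriv^[2] u (1/s) - 6 * u (1/s) * deriv u (1/s)^2
              + (1/s) * (u (1/s)^2 * deriv^[3] u (1/s)
                - 6 * u (1/s) * deriv u (1/s) * deriv^[2] u (1/s) + 6 * deriv u (1/s)^3))
            / u (1/s)^4) t := hnb.deriv_eq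
      _ = _ := (key4 t ht htJ).deriv
  -- conclude
  intro t ht htJ
  have htne : t ≠ 0 := ne_of_gt ht
  have hu0t : u (1/t) ≠ 0 := hu0 _ htJ
  have hDt : u (1/t) * deriv^[2] u (1/t) - 2 * deriv u (1/t)^2 ≠ 0 := hden _ htJ
  have hV2ne : -((1/t)^3 * (u (1/t) * deriv^[2] u (1/t) - 2 * deriv u (1/t)^2)) / u (1/t)^3 ≠ 0 := by
    apply div_ne_zero _ (pow_ne_zero 3 hu0t)
    simp only [neg_ne_zero]
    exact mul_ne_zero (pow_ne_zero 3 (one_div_ne_zero htne)) hDt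
  constructor
  · rw [d2 t ht htJ]; exact hV2ne
  · rw [d4 t ht htJ, d3 t ht htJ, d2 t ht htJ]
    exact stmt_11_aux t (u (1/t)) (deriv u (1/t)) (deriv^[2] u (1/t)) (deriv^[3] u (1/t))
      (deriv^[4] u (1/t)) htne hu0t hDt (hode _ htJ)
end

section
/- For the function f(x,u,p,q,r) = (5/3)·r²/q, at every point (x,u,p,q,r) ∈ ℝ⁵ with q ≠ 0 the Cartan invariants satisfy I₄ = 5/(9q) (in particular I₄ ≠ 0), I₅ = 0, I₆ = −10r/(9q²), and I₈ = 0. -/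
noncomputable section

/-- Functions of the five jet variables `(x, u, p, q, r)`. -/
abbrev Jet5 := ℝ → ℝ → ℝ → ℝ → ℝ → ℝ

/-- Partial derivative `F_x`. -/
def pX (F : Jet5) (x u p q r : ℝ) : ℝ := deriv (fun t => F t u p q r) x
/-- Partial derivative `F_u`. -/
def pU (F : Jet5) (x u p q r : ℝ) : ℝ := deriv (fun t => F x t p q r) u
/-- Partial derivative `F_p`. -/
def pP (F : Jet5) (x u p q r : ℝ) : ℝ := deriv (fun t => F x u t q r) p
/-- Partial derivative `F_q`. -/
def pQ (F : Jet5) (x u p q r : ℝ) : ℝ := deriv (fun t => F x u p t r) q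
/-- Partial derivative `F_r`. -/
def pR (F : Jet5) (x u p q r : ℝ) : ℝ := deriv (fun t => F x u p q t) r

/-- Total derivative operator `D̂ₓF = F_x + p F_u + q F_p + r F_q + f F_r`. -/
def Dhat (f F : Jet5) : Jet5 := fun x u p q r =>
  pX F x u p q r + p * pU F x u p q r + q * pP F x u p q r + r * pQ F x u p q r
    + f x u p q r * pR F x u p q r

/-- Cartan invariant `I₀ = −f_r`. -/
def I0 (f : Jet5) : Jet5 := fun x u p q r => - pR f x u p q r

/-- Cartan invariant `I₁ = (1/4)I₀² − (1/6)D̂ₓI₀`. -/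
def I1 (f : Jet5) : Jet5 := fun x u p q r =>
  (1 / 4) * (I0 f x u p q r) ^ 2 - (1 / 6) * Dhat f (I0 f) x u p q r

/-- Cartan invariant `I₂ = −(1/2)D̂ₓI₀ − f_q`. -/
def I2 (f : Jet5) : Jet5 := fun x u p q r =>
  -(1 / 2) * Dhat f (I0 f) x u p q r - pQ f x u p q r

/-- Cartan invariant `I₃ = −(1/8)(I₀)_r·I₀ + (1/4)(I₁)_r − (1/12)(I₂)_r`. -/
def I3 (f : Jet5) : Jet5 := fun x u p q r =>
  -(1 / 8) * pR (I0 f) x u p q r * I0 f x u p q r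
    + (1 / 4) * pR (I1 f) x u p q r - (1 / 12) * pR (I2 f) x u p q r

/-- Cartan invariant `I₄ = −(1/6)(I₀)_r`. -/
def I4 (f : Jet5) : Jet5 := fun x u p q r => -(1 / 6) * pR (I0 f) x u p q r

/-- Cartan invariant on the branch `I₄ ≠ 0`: `I₅ = −(1/2)(I₄)_r/I₄²`. -/
def I5 (f : Jet5) : Jet5 := fun x u p q r =>
  -(1 / 2) * pR (I4 f) x u p q r / (I4 f x u p q r) ^ 2

/-- Cartan invariant on the branch `I₄ ≠ 0`: `I₆ = −(3/2)I₀·I₄ − (I₂)_r − 6I₃`. -/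
def I6 (f : Jet5) : Jet5 := fun x u p q r =>
  -(3 / 2) * I0 f x u p q r * I4 f x u p q r - pR (I2 f) x u p q r - 6 * I3 f x u p q r

/-- Cartan invariant on the branch `I₄ ≠ 0`:
`I₈ = (I₆/I₄²)(D̂ₓI₄ − (I₄)_r f) − (1/I₄)D̂ₓI₆ + (3/4)I₀² − (1/2)I₀I₆/I₄
      + (3/10)I₂ + (1/3)I₆²/I₄² − (27/10)I₁`. -/
def I8 (f : Jet5) : Jet5 := fun x u p q r =>
  (I6 f x u p q r / (I4 f x u p q r) ^ 2)
      * (Dhat f (I4 f) x u p q r - pR (I4 f) x u p q r * f x u p q r)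
    - (1 / I4 f x u p q r) * Dhat f (I6 f) x u p q r
    + (3 / 4) * (I0 f x u p q r) ^ 2
    - (1 / 2) * I0 f x u p q r * I6 f x u p q r / I4 f x u p q r
    + (3 / 10) * I2 f x u p q r
    + (1 / 3) * (I6 f x u p q r) ^ 2 / (I4 f x u p q r) ^ 2
    - (27 / 10) * I1 f x u p q r

namespace Stmt13Aux

/-- The specific RHS function. -/
def FF : Jet5 := fun _ _ _ q r => (5 / 3) * r ^ 2 / q

lemma FF_def (x u p q r : ℝ) : FF x u p q r = 5 / 3 * r ^ 2 / q := rfl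

lemma deriv_lin (c x : ℝ) : deriv (fun t : ℝ => c * t) x = c := by
  rw [((hasDerivAt_id' x).const_mul c).deriv, mul_one]

lemma deriv_sq (c x : ℝ) : deriv (fun t : ℝ => c * t ^ 2) x = 2 * c * x := by
  rw [((hasDerivAt_pow 2 x).const_mul c).deriv]; push_cast; ring

lemma deriv_const_div (c x : ℝ) (hx : x ≠ 0) :
    deriv (fun t : ℝ => c / t) x = -c / x ^ 2 := by
  rw [HasDerivAt.deriv (f := fun t : ℝ => c / t)
    ((hasDerivAt_const x c).div (hasDerivAt_id' x) hx)]; ring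

lemma deriv_const_div_sq (c x : ℝ) (hx : x ≠ 0) :
    deriv (fun t : ℝ => c / t ^ 2) x = -2 * c / x ^ 3 := by
  rw [HasDerivAt.deriv (f := fun t : ℝ => c / t ^ 2)
    ((hasDerivAt_const x c).div (hasDerivAt_pow 2 x) (pow_ne_zero 2 hx))]
  push_cast; field_simp; ring

lemma pX_congr {G : Jet5} {g : ℝ → ℝ} (x u p q r : ℝ) (h : ∀ t, G t u p q r = g t) :
    pX G x u p q r = deriv g x := by unfold pX; rw [funext h]
lemma pU_congr {G : Jet5} {g : ℝ → ℝ} (x u p q r : ℝ) (h : ∀ t, G x t p q r = g t) :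
    pU G x u p q r = deriv g u := by unfold pU; rw [funext h]
lemma pP_congr {G : Jet5} {g : ℝ → ℝ} (x u p q r : ℝ) (h : ∀ t, G x u t q r = g t) :
    pP G x u p q r = deriv g p := by unfold pP; rw [funext h]
lemma pQ_congr {G : Jet5} {g : ℝ → ℝ} (x u p q r : ℝ) (h : ∀ t, G x u p t r = g t) :
    pQ G x u p q r = deriv g q := by unfold pQ; rw [funext h]
lemma pR_congr {G : Jet5} {g : ℝ → ℝ} (x u p q r : ℝ) (h : ∀ t, G x u p q t = g t) :
    pR G x u p q r = deriv g r := by unfold pR; rw [funext h]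

lemma pX_const {G : Jet5} {c : ℝ} (x u p q r : ℝ) (h : ∀ t, G t u p q r = c) :
    pX G x u p q r = 0 := by rw [pX_congr x u p q r h, deriv_const]
lemma pU_const {G : Jet5} {c : ℝ} (x u p q r : ℝ) (h : ∀ t, G x t p q r = c) :
    pU G x u p q r = 0 := by rw [pU_congr x u p q r h, deriv_const]
lemma pP_const {G : Jet5} {c : ℝ} (x u p q r : ℝ) (h : ∀ t, G x u t q r = c) :
    pP G x u p q r = 0 := by rw [pP_congr x u p q r h, deriv_const]
lemma pR_const {G : Jet5} {c : ℝ} (x u p q r : ℝ) (h : ∀ t, G x u p q t = c) :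
    pR G x u p q r = 0 := by rw [pR_congr x u p q r h, deriv_const]

lemma pR_FF (x u p q r : ℝ) : pR FF x u p q r = 10 / 3 * r / q := by
  rw [pR_congr x u p q r (fun t => by rw [FF_def]; ring :
    ∀ t, FF x u p q t = (5 / 3 / q) * t ^ 2), deriv_sq]
  ring

lemma pQ_FF (x u p q r : ℝ) (hq : q ≠ 0) :
    pQ FF x u p q r = -(5 / 3 * r ^ 2) / q ^ 2 := by
  rw [pQ_congr (g := fun t => (5 / 3 * r ^ 2) / t) x u p q r (fun t => rfl),
    deriv_const_div _ _ hq]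

lemma I0v (x u p q r : ℝ) : I0 FF x u p q r = -10 / 3 * r / q := by
  simp only [I0, pR_FF]; try ring

lemma pR_I0 (x u p q r : ℝ) : pR (I0 FF) x u p q r = -10 / 3 / q := by
  rw [pR_congr x u p q r (fun t => by rw [I0v]; try ring :
    ∀ t, I0 FF x u p q t = (-10 / 3 / q) * t), deriv_lin]

lemma pQ_I0 (x u p q r : ℝ) (hq : q ≠ 0) :
    pQ (I0 FF) x u p q r = 10 / 3 * r / q ^ 2 := by
  rw [pQ_congr x u p q r (fun t => by rw [I0v]; try ring :
    ∀ t, I0 FF x u p t r = (-10 / 3 * r) / t), deriv_const_div _ _ hq]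
  ring

lemma Dhat_I0 (x u p q r : ℝ) (hq : q ≠ 0) :
    Dhat FF (I0 FF) x u p q r = -20 / 9 * r ^ 2 / q ^ 2 := by
  simp only [Dhat]
  rw [pX_const x u p q r (fun t => I0v t u p q r),
    pU_const x u p q r (fun t => I0v x t p q r),
    pP_const x u p q r (fun t => I0v x u t q r),
    pQ_I0 x u p q r hq, pR_I0, FF_def]
  field_simp; ring

lemma I1v (x u p q r : ℝ) (hq : q ≠ 0) :
    I1 FF x u p q r = 85 / 27 * r ^ 2 / q ^ 2 := by
  simp only [I1]; rw [I0v, Dhat_I0 x u p q r hq]; field_simp; ring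

lemma I2v (x u p q r : ℝ) (hq : q ≠ 0) :
    I2 FF x u p q r = 25 / 9 * r ^ 2 / q ^ 2 := by
  simp only [I2]; rw [Dhat_I0 x u p q r hq, pQ_FF x u p q r hq]; field_simp; ring

lemma pR_I1 (x u p q r : ℝ) (hq : q ≠ 0) :
    pR (I1 FF) x u p q r = 170 / 27 * r / q ^ 2 := by
  rw [pR_congr x u p q r (fun t => by rw [I1v x u p q t hq]; ring :
    ∀ t, I1 FF x u p q t = (85 / 27 / q ^ 2) * t ^ 2), deriv_sq]
  ring

lemma pR_I2 (x u p q r : ℝ) (hq : q ≠ 0) :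
    pR (I2 FF) x u p q r = 50 / 9 * r / q ^ 2 := by
  rw [pR_congr x u p q r (fun t => by rw [I2v x u p q t hq]; ring :
    ∀ t, I2 FF x u p q t = (25 / 9 / q ^ 2) * t ^ 2), deriv_sq]
  ring

lemma I3v (x u p q r : ℝ) (hq : q ≠ 0) :
    I3 FF x u p q r = -5 / 18 * r / q ^ 2 := by
  simp only [I3]
  rw [pR_I0, I0v, pR_I1 x u p q r hq, pR_I2 x u p q r hq]
  field_simp; ring

lemma I4v (x u p q r : ℝ) : I4 FF x u p q r = 5 / (9 * q) := by
  simp only [I4]; rw [pR_I0]; ring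

lemma pR_I4 (x u p q r : ℝ) : pR (I4 FF) x u p q r = 0 :=
  pR_const x u p q r (fun t => I4v x u p q t)

lemma pQ_I4 (x u p q r : ℝ) (hq : q ≠ 0) :
    pQ (I4 FF) x u p q r = -5 / (9 * q ^ 2) := by
  rw [pQ_congr x u p q r (fun t => by rw [I4v]; try ring :
    ∀ t, I4 FF x u p t r = (5 / 9) / t), deriv_const_div _ _ hq]
  ring

lemma I5v (x u p q r : ℝ) : I5 FF x u p q r = 0 := by
  simp [I5, pR_I4]

lemma I6v (x u p q r : ℝ) (hq : q ≠ 0) :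
    I6 FF x u p q r = -10 * r / (9 * q ^ 2) := by
  simp only [I6]
  rw [I0v, I4v, pR_I2 x u p q r hq, I3v x u p q r hq]
  field_simp; ring

lemma pR_I6 (x u p q r : ℝ) (hq : q ≠ 0) :
    pR (I6 FF) x u p q r = -10 / (9 * q ^ 2) := by
  rw [pR_congr x u p q r (fun t => by rw [I6v x u p q t hq]; ring :
    ∀ t, I6 FF x u p q t = (-10 / (9 * q ^ 2)) * t), deriv_lin]

lemma pQ_I6 (x u p q r : ℝ) (hq : q ≠ 0) :
    pQ (I6 FF) x u p q r = 20 * r / (9 * q ^ 3) := by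
  have he : (fun t => I6 FF x u p t r) =ᶠ[nhds q] fun t => (-10 * r / 9) / t ^ 2 := by
    filter_upwards [eventually_ne_nhds hq] with t ht
    rw [I6v x u p t r ht]; ring
  unfold pQ
  rw [he.deriv_eq, deriv_const_div_sq _ _ hq]; ring

lemma Dhat_I4 (x u p q r : ℝ) (hq : q ≠ 0) :
    Dhat FF (I4 FF) x u p q r = -5 * r / (9 * q ^ 2) := by
  simp only [Dhat]
  rw [pX_const x u p q r (fun t => I4v t u p q r),
    pU_const x u p q r (fun t => I4v x t p q r),
    pP_const x u p q r (fun t => I4v x u t q r),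
    pQ_I4 x u p q r hq, pR_I4, FF_def]
  field_simp; ring

lemma Dhat_I6 (x u p q r : ℝ) (hq : q ≠ 0) :
    Dhat FF (I6 FF) x u p q r = 10 / 27 * r ^ 2 / q ^ 3 := by
  simp only [Dhat]
  rw [pX_const x u p q r (fun t => I6v t u p q r hq),
    pU_const x u p q r (fun t => I6v x t p q r hq),
    pP_const x u p q r (fun t => I6v x u t q r hq),
    pQ_I6 x u p q r hq, pR_I6 x u p q r hq, FF_def]
  field_simp; ring

lemma I8v (x u p q r : ℝ) (hq : q ≠ 0) : I8 FF x u p q r = 0 := by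
  simp only [I8]
  rw [I6v x u p q r hq, I4v, Dhat_I4 x u p q r hq, pR_I4, FF_def,
    Dhat_I6 x u p q r hq, I0v, I2v x u p q r hq, I1v x u p q r hq]
  field_simp
  ring

end Stmt13Aux


/-- for `f = (5/3)r²/q`, at every point with `q ≠ 0`:
`I₄ = 5/(9q) ≠ 0`, `I₅ = 0`, `I₆ = −10r/(9q²)`, `I₈ = 0`. -/
theorem stmt_13 (f : Jet5) (hf : f = fun _ _ _ q r => (5 / 3) * r ^ 2 / q) :
    ∀ x u p q r : ℝ, q ≠ 0 →
      I4 f x u p q r = 5 / (9 * q) ∧ I4 f x u p q r ≠ 0 ∧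
      I5 f x u p q r = 0 ∧
      I6 f x u p q r = -10 * r / (9 * q ^ 2) ∧
      I8 f x u p q r = 0 := by
  subst hf
  intro x u p q r hq
  refine ⟨Stmt13Aux.I4v x u p q r, ?_, Stmt13Aux.I5v x u p q r,
    Stmt13Aux.I6v x u p q r hq, Stmt13Aux.I8v x u p q r hq⟩
  show I4 Stmt13Aux.FF x u p q r ≠ 0
  rw [Stmt13Aux.I4v]
  exact div_ne_zero (by norm_num) (mul_ne_zero (by norm_num) hq)
end
end

section
/- For the function f(x,u,p,q,r) = r², at every point (x,u,p,q,r) ∈ ℝ⁵ the Cartan invariants satisfy I₄ = 1/3, I₅ = 0, I₆ = −r, and I₈ = (27/10)·r²; in particular I₄ ≠ 0 everywhere and I₈ ≠ 0 at every point with r ≠ 0. -/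
noncomputable section

def f0 : Jet5 := fun _ _ _ _ r => r ^ 2

lemma d2 : (deriv fun t : ℝ => t ^ 2) = fun t : ℝ => 2 * t := by
  funext t; simp

lemma dmul2 : (deriv fun t : ℝ => 2 * t) = fun _ : ℝ => (2 : ℝ) := by
  funext t
  rw [deriv_const_mul _ (differentiableAt_fun_id)]
  simp

lemma hI0 : I0 f0 = fun _ _ _ _ r => -(2 * r) := by
  funext x u p q r
  simp [I0, pR, f0, d2]

lemma hDI0 : Dhat f0 (I0 f0) = fun _ _ _ _ r => -(2 * r ^ 2) := by
  funext x u p q r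
  simp [Dhat, I0, pX, pU, pP, pQ, pR, f0, d2, dmul2]
  try ring

lemma hI1 : I1 f0 = fun _ _ _ _ r => (4 / 3) * r ^ 2 := by
  funext x u p q r
  have := congrFun (congrFun (congrFun (congrFun (congrFun hDI0 x) u) p) q) r
  simp only [I1]
  rw [this]
  simp [hI0]
  ring

lemma hI2 : I2 f0 = fun _ _ _ _ r => r ^ 2 := by
  funext x u p q r
  have := congrFun (congrFun (congrFun (congrFun (congrFun hDI0 x) u) p) q) r
  simp only [I2]
  rw [this]
  simp [pQ, f0]

lemma hI3 : I3 f0 = fun _ _ _ _ _ => (0 : ℝ) := by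
  funext x u p q r
  simp [I3, hI0, hI1, hI2, pR, d2, dmul2]
  ring

lemma hI4 : I4 f0 = fun _ _ _ _ _ => (1 / 3 : ℝ) := by
  funext x u p q r
  simp [I4, hI0, pR, dmul2]
  norm_num

lemma hI5 : I5 f0 = fun _ _ _ _ _ => (0 : ℝ) := by
  funext x u p q r
  simp [I5, hI4, pR]

lemma hI6 : I6 f0 = fun _ _ _ _ r => -r := by
  funext x u p q r
  simp [I6, hI0, hI2, hI3, hI4, pR, d2, dmul2]
  ring

lemma hI8 : I8 f0 = fun _ _ _ _ r => (27 / 10) * r ^ 2 := by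
  funext x u p q r
  simp [I8, hI0, hI1, hI2, hI4, hI6, Dhat, pX, pU, pP, pQ, pR, f0, d2, dmul2]
  ring

/-- for `f = r²`, at every point:
`I₄ = 1/3`, `I₅ = 0`, `I₆ = −r`, `I₈ = (27/10)r²`; in particular `I₄ ≠ 0`
everywhere and `I₈ ≠ 0` wherever `r ≠ 0`. -/
theorem stmt_14 (f : Jet5) (hf : f = fun _ _ _ _ r => r ^ 2) :
    ∀ x u p q r : ℝ,
      I4 f x u p q r = 1 / 3 ∧
      I5 f x u p q r = 0 ∧
      I6 f x u p q r = -r ∧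
      I8 f x u p q r = (27 / 10) * r ^ 2 ∧
      I4 f x u p q r ≠ 0 ∧
      (r ≠ 0 → I8 f x u p q r ≠ 0) := by
  have hf0 : f = f0 := hf
  subst hf0
  intro x u p q r
  refine ⟨by rw [hI4], by rw [hI5], by rw [hI6], by rw [hI8], by rw [hI4]; norm_num,
    fun hr => by rw [hI8]; positivity⟩
end
end

section
/- Let m be a real number with m ∉ {0, 1, 2}. For the function f(x,u,p,q,r) = r^m (real power, defined for r > 0), at every point (x,u,p,q,r) ∈ ℝ⁵ with r > 0 the Cartan invariants satisfy I₄ = (m(m−1)/6)·r^(m−2) and I₅ = −(3(m−2)/(m(m−1)))·r^(1−m); in particular I₄ ≠ 0, and if additionally m ≠ 2 then I₅ ≠ 0. -/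
noncomputable section

/-- for `f = r^m` (real power, `m ∉ {0,1,2}`), at every point with `r > 0`:
`I₄ = (m(m−1)/6)·r^(m−2)` and `I₅ = −(3(m−2)/(m(m−1)))·r^(1−m)`; in particular
`I₄ ≠ 0`, and if additionally `m ≠ 2` then `I₅ ≠ 0`. -/
theorem stmt_15 (m : ℝ) (hm0 : m ≠ 0) (hm1 : m ≠ 1) (hm2 : m ≠ 2)
    (f : Jet5) (hf : f = fun _ _ _ _ r => r ^ m) :
    ∀ x u p q r : ℝ, 0 < r →
      I4 f x u p q r = (m * (m - 1) / 6) * r ^ (m - 2) ∧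
      I5 f x u p q r = -(3 * (m - 2) / (m * (m - 1))) * r ^ (1 - m) ∧
      I4 f x u p q r ≠ 0 ∧
      (m ≠ 2 → I5 f x u p q r ≠ 0) := by
  subst hf
  intro x u p q r hr
  set g : Jet5 := fun _ _ _ _ r => r ^ m with hg
  -- I0 pointwise for t > 0
  have hI0 : ∀ t : ℝ, 0 < t → I0 g x u p q t = -(m * t ^ (m - 1)) := by
    intro t ht
    simp only [I0, pR, hg]
    rw [Real.deriv_rpow_const]
  -- I4 pointwise for t > 0
  have hI4 : ∀ t : ℝ, 0 < t → I4 g x u p q t = m * (m - 1) / 6 * t ^ (m - 2) := by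
    intro t ht
    have hev : (fun s => I0 g x u p q s) =ᶠ[nhds t] fun s => -(m * s ^ (m - 1)) := by
      filter_upwards [isOpen_Ioi.eventually_mem ht] with s hs using hI0 s hs
    have hd : pR (I0 g) x u p q t = -(m * ((m - 1) * t ^ (m - 1 - 1))) := by
      show deriv _ t = _
      rw [hev.deriv_eq, deriv.fun_neg, deriv_const_mul _
        ((Real.hasDerivAt_rpow_const (Or.inl ht.ne')).differentiableAt),
        Real.deriv_rpow_const]
    have he : m - 1 - 1 = m - 2 := by ring
    simp only [I4, hd, he]
    ring
  have hI4r := hI4 r hr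
  have hI4ev : (fun s => I4 g x u p q s) =ᶠ[nhds r] fun s => m * (m - 1) / 6 * s ^ (m - 2) := by
    filter_upwards [isOpen_Ioi.eventually_mem hr] with s hs using hI4 s hs
  have hdI4 : pR (I4 g) x u p q r = m * (m - 1) / 6 * ((m - 2) * r ^ (m - 2 - 1)) := by
    show deriv _ r = _
    rw [hI4ev.deriv_eq, deriv_const_mul _
      ((Real.hasDerivAt_rpow_const (Or.inl hr.ne')).differentiableAt),
      Real.deriv_rpow_const]
  have hm1' : m - 1 ≠ 0 := sub_ne_zero.mpr hm1
  have hrp : ∀ s : ℝ, r ^ s ≠ 0 := fun s => (Real.rpow_pos_of_pos hr s).ne'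
  have hI4ne : I4 g x u p q r ≠ 0 := by
    rw [hI4r]
    exact mul_ne_zero (div_ne_zero (mul_ne_zero hm0 hm1') (by norm_num)) (hrp _)
  have hI5 : I5 g x u p q r = -(3 * (m - 2) / (m * (m - 1))) * r ^ (1 - m) := by
    have hsplit : r ^ (m - 2 - 1) = r ^ (1 - m) * (r ^ (m - 2) * r ^ (m - 2)) := by
      rw [← Real.rpow_add hr, ← Real.rpow_add hr]
      congr 1; ring
    simp only [I5, hdI4, hI4r]
    rw [hsplit]
    field_simp
    ring
  refine ⟨hI4r, hI5, hI4ne, fun hm2' => ?_⟩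
  rw [hI5]
  exact mul_ne_zero (neg_ne_zero.mpr (div_ne_zero (mul_ne_zero (by norm_num)
    (sub_ne_zero.mpr hm2')) (mul_ne_zero hm0 hm1'))) (hrp _)
end
end
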